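/- Let c > 0, β ∈ ℝ, t > 0, and let y : [0,t] → ℝ be continuous with y(0) = 0 and |y(τ) - y(s)| < c|τ - s| for all τ ≠ s. Define φ(x,t) = (β/(2c)) ∫₀ᵗ 1{ y(τ) - c(t-τ) < x < y(τ) + c(t-τ) } dτ. Then φ(x,t) = (β/(2c)) τ(x), where τ(x) is the retarded-time function; in particular φ(y(t), t) = (β/(2c)) t, so the interaction energy U_fp(t) = -β φ(y(t), t) = -(β²/(2c)) t. -/

import Mathlib

open MeasureTheory

/-- for a delta interaction, the field equals `(β/(2c)) τ(x)` where
`τ` is the retarded time; hence `φ(y t, t) = (β/(2c)) t` and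
`U_fp = -β φ(y t, t) = -(β²/(2c)) t`. -/
theorem stmt_9 (c β t : ℝ) (hc : 0 < c) (ht : 0 < t)
    (y : ℝ → ℝ) (hy : Continuous y) (h0 : y 0 = 0)
    (hLip : ∀ s ∈ Set.Icc (0:ℝ) t, ∀ τ ∈ Set.Icc (0:ℝ) t, s ≠ τ →
      |y τ - y s| < c * |τ - s|)
    (τf : ℝ → ℝ)
    (hτ1 : ∀ x ∈ Set.Icc (-(c*t)) (y t),
      τf x ∈ Set.Icc (0:ℝ) t ∧ x = y (τf x) - c*(t - τf x))
    (hτ2 : ∀ x ∈ Set.Icc (y t) (c*t),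
      τf x ∈ Set.Icc (0:ℝ) t ∧ x = y (τf x) + c*(t - τf x))
    (hτ3 : ∀ x, x ∉ Set.Icc (-(c*t)) (c*t) → τf x = 0)
    (φ : ℝ → ℝ)
    (hφ : ∀ x, φ x = (β/(2*c)) * ∫ s in (0:ℝ)..t,
      Set.indicator (Set.Ioo (y s - c*(t-s)) (y s + c*(t-s))) (fun _ => (1:ℝ)) x) :
    (∀ x, φ x = (β/(2*c)) * τf x) ∧
    φ (y t) = (β/(2*c)) * t ∧
    -β * φ (y t) = -(β^2/(2*c)) * t := by
  -- |y s| ≤ c * s on [0, t]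
  have hyabs : ∀ s ∈ Set.Icc (0:ℝ) t, |y s| ≤ c * s := by
    intro s hs
    rcases eq_or_lt_of_le hs.1 with h | h
    · simp [← h, h0]
    · have h' := hLip 0 ⟨le_refl 0, ht.le⟩ s hs (by linarith)
      rw [h0, sub_zero, sub_zero, abs_of_pos h] at h'
      exact h'.le
  have hyt : |y t| < c * t := by
    have h' := hLip 0 ⟨le_refl 0, ht.le⟩ t ⟨ht.le, le_refl t⟩ ht.ne
    rwa [h0, sub_zero, sub_zero, abs_of_pos ht] at h'
  have hytlt := abs_lt.mp hyt
  -- key computation of the integral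
  have key : ∀ x, (∫ s in (0:ℝ)..t,
      Set.indicator (Set.Ioo (y s - c*(t-s)) (y s + c*(t-s))) (fun _ => (1:ℝ)) x) = τf x := by
    intro x
    by_cases hx : x ∈ Set.Icc (-(c*t)) (c*t)
    · -- obtain the retarded time
      obtain ⟨hτ0, habs⟩ : τf x ∈ Set.Icc (0:ℝ) t ∧ |x - y (τf x)| = c * (t - τf x) := by
        rcases le_total x (y t) with hxy | hxy
        · obtain ⟨h1, h2⟩ := hτ1 x ⟨hx.1, hxy⟩
          refine ⟨h1, ?_⟩
          have he : x - y (τf x) = -(c * (t - τf x)) := by linarith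
          rw [he, abs_neg, abs_of_nonneg]
          nlinarith [h1.2]
        · obtain ⟨h1, h2⟩ := hτ2 x ⟨hxy, hx.2⟩
          refine ⟨h1, ?_⟩
          have he : x - y (τf x) = c * (t - τf x) := by linarith
          rw [he, abs_of_nonneg]
          nlinarith [h1.2]
      set τ0 := τf x with hτ0def
      have hmem : ∀ s ∈ Set.Icc (0:ℝ) t,
          (x ∈ Set.Ioo (y s - c*(t-s)) (y s + c*(t-s)) ↔ s < τ0) := by
        intro s hs
        constructor
        · intro hin
          have habs2 : |x - y s| < c * (t - s) := by
            rw [abs_lt]; obtain ⟨ha, hb⟩ := hin; constructor <;> linarith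
          by_contra hle
          push_neg at hle
          rcases eq_or_lt_of_le hle with he | hlt
          · rw [← he] at habs2; linarith
          · have h1 := hLip s hs τ0 hτ0 (ne_of_gt hlt)
            rw [abs_of_neg (by linarith : τ0 - s < 0)] at h1
            have h2 : |x - y τ0| ≤ |x - y s| + |y s - y τ0| := abs_sub_le x (y s) (y τ0)
            have h3 : |y s - y τ0| = |y τ0 - y s| := abs_sub_comm _ _
            rw [h3] at h2
            linarith
        · intro hlt
          have h1 := hLip s hs τ0 hτ0 (ne_of_lt hlt)
          rw [abs_of_pos (by linarith : (0:ℝ) < τ0 - s)] at h1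
          have h2 : |x - y s| ≤ |x - y τ0| + |y τ0 - y s| := abs_sub_le x (y τ0) (y s)
          have h4 : |x - y s| < c * (t - s) := by linarith
          have h5 := abs_lt.mp h4
          constructor <;> [linarith [h5.1]; linarith [h5.2]]
      have hEq : Set.EqOn
          (fun s => Set.indicator (Set.Ioo (y s - c*(t-s)) (y s + c*(t-s))) (fun _ => (1:ℝ)) x)
          (Set.indicator (Set.Ico (0:ℝ) τ0) (fun _ => (1:ℝ))) (Set.uIcc (0:ℝ) t) := by
        intro s hs
        rw [Set.uIcc_of_le ht.le] at hs
        by_cases h : s < τ0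
        · simp only [Set.indicator_of_mem ((hmem s hs).mpr h),
            Set.indicator_of_mem (Set.mem_Ico.mpr ⟨hs.1, h⟩)]
        · simp only [Set.indicator_of_notMem (fun hm => h ((hmem s hs).mp hm)),
            Set.indicator_of_notMem (fun hm : s ∈ Set.Ico (0:ℝ) τ0 => h hm.2)]
      rw [intervalIntegral.integral_congr hEq,
        intervalIntegral.integral_of_le ht.le,
        MeasureTheory.integral_indicator measurableSet_Ico,
        Measure.restrict_restrict measurableSet_Ico]
      have hset : Set.Ico (0:ℝ) τ0 ∩ Set.Ioc 0 t = Set.Ioo 0 τ0 := by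
        ext z
        simp only [Set.mem_inter_iff, Set.mem_Ico, Set.mem_Ioc, Set.mem_Ioo]
        constructor
        · rintro ⟨⟨_, h2⟩, h3, _⟩; exact ⟨h3, h2⟩
        · rintro ⟨h1, h2⟩; exact ⟨⟨h1.le, h2⟩, h1, by linarith [hτ0.2]⟩
      rw [hset]
      simp [Real.volume_Ioo, ENNReal.toReal_ofReal hτ0.1, hτ0.1]
    · -- x outside the light cone: integrand vanishes
      rw [hτ3 x hx]
      have hEq : Set.EqOn
          (fun s => Set.indicator (Set.Ioo (y s - c*(t-s)) (y s + c*(t-s))) (fun _ => (1:ℝ)) x)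
          (fun _ => (0:ℝ)) (Set.uIcc (0:ℝ) t) := by
        intro s hs
        rw [Set.uIcc_of_le ht.le] at hs
        have hb := abs_le.mp (hyabs s hs)
        simp only [Set.mem_Icc, not_and_or, not_le] at hx
        refine Set.indicator_of_notMem ?_ _
        intro hm
        obtain ⟨ha, hb'⟩ := hm
        rcases hx with h | h
        · nlinarith [hs.1, hs.2]
        · nlinarith [hs.1, hs.2]
      rw [intervalIntegral.integral_congr hEq]
      simp
  -- τf (y t) = t
  have hτyt : τf (y t) = t := by
    obtain ⟨h1, h2⟩ := hτ1 (y t) ⟨by linarith [hytlt.1], le_refl _⟩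
    by_contra hne
    have h3 := hLip t ⟨ht.le, le_refl t⟩ (τf (y t)) h1 (fun h => hne h.symm)
    have h4 : |y (τf (y t)) - y t| = c * (t - τf (y t)) := by
      have : y (τf (y t)) - y t = c * (t - τf (y t)) := by linarith
      rw [this, abs_of_nonneg]; nlinarith [h1.2]
    rw [h4, abs_of_nonpos (by linarith [h1.2] : τf (y t) - t ≤ 0)] at h3
    linarith
  have hmain : ∀ x, φ x = (β/(2*c)) * τf x := fun x => by rw [hφ x, key x]
  refine ⟨hmain, ?_, ?_⟩
  · rw [hmain (y t), hτyt]
  · rw [hmain (y t), hτyt]; field_simp
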